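/- Let (ε,δ) ∈ (0,1)². Let μ ∈ 𝒫(X) and, for each x ∈ X, let ν_x ∈ 𝒫(X) (in the algorithm, ν_x = P(·|x,f_Q(x),μ)). Let {Y_t^x : x ∈ X, 1 ≤ t ≤ M} be independent random variables with Y_t^x distributed according to ν_x, and let ν̂_x := (1/M) ∑_{t=1}^M δ_{Y_t^x} be the empirical distributions. If M ≥ (|X|²/ε²) ln(2|X|²/δ), then with probability at least 1 − δ, ‖∑_{x∈X} ν̂_x(·) μ(x) − ∑_{x∈X} ν_x(·) μ(x)‖₁ ≤ ε. (Theorem 3 (Thm-H2): error bound for the random operator Ĥ2.) -/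

import Mathlib

namespace MFG

open Finset

def IsProb {E : Type*} [Fintype E] (μ : E → ℝ) : Prop :=
  (∀ e, 0 ≤ μ e) ∧ ∑ e, μ e = 1

def l1 {E : Type*} [Fintype E] (μ ν : E → ℝ) : ℝ :=
  ∑ e, |μ e - ν e|

def ind {E : Type*} [DecidableEq E] (x y : E) : ℝ :=
  if x = y then 0 else 1

def RewardLip {X A : Type*} [Fintype X] [Fintype A] [DecidableEq X] [DecidableEq A]
    (r : X → A → (X → ℝ) → ℝ) (L1 : ℝ) : Prop :=
  ∀ x x' a a' μ μ', IsProb μ → IsProb μ' →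
    |r x a μ - r x' a' μ'| ≤ L1 * (ind x x' + 2 * ind a a' + l1 μ μ')

def KernelLip {X A : Type*} [Fintype X] [Fintype A] [DecidableEq X] [DecidableEq A]
    (p : X → A → (X → ℝ) → X → ℝ) (K1 : ℝ) : Prop :=
  ∀ x x' a a' μ μ', IsProb μ → IsProb μ' →
    l1 (p x a μ) (p x' a' μ') ≤ K1 * (ind x x' + 2 * ind a a' + l1 μ μ')

def IsKernel {X A : Type*} [Fintype X] [Fintype A]
    (p : X → A → (X → ℝ) → X → ℝ) : Prop :=
  ∀ x a μ, IsProb μ → IsProb (p x a μ)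

def RewardNonneg {X A : Type*} [Fintype X] [Fintype A]
    (r : X → A → (X → ℝ) → ℝ) : Prop :=
  ∀ x a μ, IsProb μ → 0 ≤ r x a μ

def OmegaLip {A : Type*} [Fintype A] (Ω : (A → ℝ) → ℝ) (Lreg : ℝ) : Prop :=
  ∀ u v, IsProb u → IsProb v → |Ω u - Ω v| ≤ Lreg * l1 u v

def StrongConvex {A : Type*} [Fintype A] (Ω : (A → ℝ) → ℝ)
    (DΩ : (A → ℝ) → (A → ℝ)) (ρ : ℝ) : Prop :=
  ∀ u v, IsProb u → IsProb v →
    Ω u + (∑ a, DΩ u a * (v a - u a)) + ρ / 2 * (l1 u v) ^ 2 ≤ Ω v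

noncomputable def Tbell {X A : Type*} [Fintype X] [Fintype A]
    (r : X → A → (X → ℝ) → ℝ) (p : X → A → (X → ℝ) → X → ℝ)
    (Ω : (A → ℝ) → ℝ) (β : ℝ) (μ : X → ℝ) (v : X → ℝ) (x : X) : ℝ :=
  ⨆ u : {w : A → ℝ // IsProb w},
    ((∑ a, r x a μ * u.1 a) - Ω u.1 + β * ∑ y, v y * (∑ a, p x a μ y * u.1 a))

noncomputable def Qmax {X A : Type*} [Fintype A] (Q : X → (A → ℝ) → ℝ) (y : X) : ℝ :=
  ⨆ u : {w : A → ℝ // IsProb w}, Q y u.1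

noncomputable def Lbell {X A : Type*} [Fintype X] [Fintype A]
    (r : X → A → (X → ℝ) → ℝ) (p : X → A → (X → ℝ) → X → ℝ)
    (Ω : (A → ℝ) → ℝ) (β : ℝ) (μ : X → ℝ) (Q : X → (A → ℝ) → ℝ)
    (x : X) (u : A → ℝ) : ℝ :=
  (∑ a, r x a μ * u a) - Ω u + β * ∑ y, Qmax Q y * (∑ a, p x a μ y * u a)

def BddFixedPoint {X A : Type*} [Fintype X] [Fintype A]
    (r : X → A → (X → ℝ) → ℝ) (p : X → A → (X → ℝ) → X → ℝ)
    (Ω : (A → ℝ) → ℝ) (β : ℝ) (μ : X → ℝ) (Q : X → (A → ℝ) → ℝ) : Prop :=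
  (∃ C, ∀ x u, IsProb u → |Q x u| ≤ C) ∧
  (∀ x u, IsProb u → Q x u = Lbell r p Ω β μ Q x u)

open MeasureTheory ProbabilityTheory Real
open scoped ENNReal

lemma bern_mgf_bound {p θ : ℝ} (hp0 : 0 ≤ p) (hp1 : p ≤ 1) (hθ0 : 0 ≤ θ) (hθ2 : θ ≤ 2) :
    1 - p + p * Real.exp θ ≤ Real.exp (p * θ + θ ^ 2 / 4) := by
  set F : ℝ → ℝ := fun x => p * x + x ^ 2 / 4 - Real.log (1 - p + p * Real.exp x) with hF
  have hg_pos : ∀ x : ℝ, 0 ≤ x → 0 < 1 - p + p * Real.exp x := by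
    intro x hx
    nlinarith [Real.one_le_exp hx]
  have hderiv : ∀ x ∈ Set.Icc (0:ℝ) 2,
      HasDerivAt F (p + x / 2 - p * Real.exp x / (1 - p + p * Real.exp x)) x := by
    intro x hx
    have h1 : HasDerivAt (fun y : ℝ => p * y) p x := by
      simpa using (hasDerivAt_id x).const_mul p
    have h2 : HasDerivAt (fun y : ℝ => y ^ 2 / 4) (x / 2) x := by
      have := (hasDerivAt_pow 2 x).div_const 4
      simpa [pow_one] using this.congr_deriv (by ring)
    have hin : HasDerivAt (fun y : ℝ => 1 - p + p * Real.exp y) (p * Real.exp x) x :=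
      ((Real.hasDerivAt_exp x).const_mul p).const_add (1 - p)
    have h3 : HasDerivAt (fun y : ℝ => Real.log (1 - p + p * Real.exp y))
        (p * Real.exp x / (1 - p + p * Real.exp x)) x :=
      hin.log (hg_pos x hx.1).ne'
    exact (h1.add h2).sub h3
  have key : ∀ x ∈ Set.Icc (0:ℝ) 2,
      0 ≤ p + x / 2 - p * Real.exp x / (1 - p + p * Real.exp x) := by
    intro x hx
    obtain ⟨hx0, hx2⟩ := hx
    have hgp := hg_pos x hx0
    set u : ℝ := Real.exp (x / 2) with hu
    have hu1 : 1 ≤ u := Real.one_le_exp (by linarith)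
    have hu3 : u ≤ 3 := by
      have : Real.exp (x / 2) ≤ Real.exp 1 := Real.exp_le_exp.2 (by linarith)
      have he : Real.exp 1 < 2.7182818286 := Real.exp_one_lt_d9
      linarith
    have hE : Real.exp x = u ^ 2 := by
      rw [hu, sq, ← Real.exp_add]; norm_num
    -- exp(x/2) - 1 ≤ (x/2) * exp(x/2)
    have hstep : u - 1 ≤ (x / 2) * u := by
      have h := Real.add_one_le_exp (-(x / 2))
      have hmul : Real.exp (-(x / 2)) * u = 1 := by
        rw [hu, ← Real.exp_add]; simp
      nlinarith [Real.exp_pos (x / 2)]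
    -- key quadratic: 4 p (1-p) u ≤ (1-p) + p u²
    have hquad : 4 * p * (1 - p) * u ≤ (1 - p) + p * u ^ 2 := by
      rcases eq_or_lt_of_le hp0 with h0 | h0
      · norm_num [← h0]
      · nlinarith [sq_nonneg (p * u - 2 * p * (1 - p)), sq_nonneg (p - (1 - p)),
          mul_nonneg hp0 (by linarith : (0:ℝ) ≤ 1 - p), h0]
    -- main inequality: p(1-p)(e^x - 1) ≤ (x/2) g
    have hmain : p * (1 - p) * (Real.exp x - 1) ≤ (x / 2) * (1 - p + p * Real.exp x) := by
      have hE1 : Real.exp x - 1 ≤ (x / 2) * u * (u + 1) := by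
        have : Real.exp x - 1 = (u - 1) * (u + 1) := by rw [hE]; ring
        rw [this]
        have := mul_le_mul_of_nonneg_right hstep (by linarith : (0:ℝ) ≤ u + 1)
        linarith
      have hpq : 0 ≤ p * (1 - p) := mul_nonneg hp0 (by linarith)
      have c1 : p * (1 - p) * (Real.exp x - 1) ≤ p * (1 - p) * ((x / 2) * u * (u + 1)) := by
        apply mul_le_mul_of_nonneg_left hE1 hpq
      have c2 : p * (1 - p) * ((x / 2) * u * (u + 1)) ≤ (x / 2) * ((1 - p) + p * u ^ 2) := by
        have h4 : p * (1 - p) * (u * (u + 1)) ≤ 4 * p * (1 - p) * u := by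
          nlinarith [mul_nonneg (mul_nonneg hpq (by linarith : (0:ℝ) ≤ u))
            (by linarith : (0:ℝ) ≤ 3 - u)]
        have := mul_le_mul_of_nonneg_left (h4.trans hquad) (by linarith : (0:ℝ) ≤ x / 2)
        nlinarith [this]
      have hEq : x / 2 * (1 - p + p * u ^ 2) = x / 2 * (1 - p + p * Real.exp x) := by
        rw [hE]
      rw [hE]; nlinarith [c1, c2]
    rw [sub_nonneg, div_le_iff₀ hgp]
    nlinarith [hmain]
  have hmono : MonotoneOn F (Set.Icc (0:ℝ) 2) := by
    apply monotoneOn_of_deriv_nonneg (convex_Icc 0 2)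
    · exact fun x hx => ((hderiv x hx).continuousAt).continuousWithinAt
    · intro x hx
      rw [interior_Icc] at hx
      exact ((hderiv x (Set.mem_Icc_of_Ioo hx)).differentiableAt).differentiableWithinAt
    · intro x hx
      rw [interior_Icc] at hx
      rw [(hderiv x (Set.mem_Icc_of_Ioo hx)).deriv]
      exact key x (Set.mem_Icc_of_Ioo hx)
  have hF0 : F 0 = 0 := by simp [hF]
  have hFθ : 0 ≤ F θ := by
    have := hmono (Set.left_mem_Icc.2 (by norm_num)) ⟨hθ0, hθ2⟩ hθ0
    rwa [hF0] at this
  have hgp := hg_pos θ hθ0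
  have : Real.log (1 - p + p * Real.exp θ) ≤ p * θ + θ ^ 2 / 4 := by
    simp only [hF] at hFθ; linarith
  calc 1 - p + p * Real.exp θ = Real.exp (Real.log (1 - p + p * Real.exp θ)) :=
        (Real.exp_log hgp).symm
    _ ≤ _ := Real.exp_le_exp.2 this

lemma chernoff_aux {W ι : Type*} [MeasurableSpace W] (P : Measure W)
    [IsProbabilityMeasure P]
    (Z : ι → W → ℝ) (hmeas : ∀ i, Measurable (Z i))
    (hindep : iIndepFun Z P)
    (F : Finset ι) (p : ℝ) (hp0 : 0 ≤ p) (hp1 : p ≤ 1)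
    (hval : ∀ i w, 0 ≤ Z i w ∧ Z i w ≤ 1)
    (hmgf : ∀ i ∈ F, ∀ θ : ℝ, mgf (Z i) P θ = 1 - p + p * Real.exp θ)
    (t : ℝ) (ht0 : 0 ≤ t) (ht1 : t ≤ 1) :
    P {w | (F.card : ℝ) * (p + t) ≤ ∑ i ∈ F, Z i w} ≤
      ENNReal.ofReal (Real.exp (-(F.card : ℝ) * t ^ 2)) := by
  set θ : ℝ := 2 * t with hθ
  have hθ0 : 0 ≤ θ := by positivity
  have hθ2 : θ ≤ 2 := by simp [hθ]; linarith
  set X : W → ℝ := ∑ i ∈ F, Z i with hX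
  have hXapp : ∀ w, X w = ∑ i ∈ F, Z i w := fun w => by simp [hX]
  have h_meas_X : Measurable X := by
    have h := Finset.measurable_sum F fun i _ => hmeas i
    rwa [show (fun a => ∑ i ∈ F, Z i a) = X from funext fun w => (hXapp w).symm] at h
  have hXle : ∀ w, X w ≤ (F.card : ℝ) := by
    intro w
    rw [hXapp]
    calc ∑ i ∈ F, Z i w ≤ ∑ i ∈ F, (1:ℝ) := Finset.sum_le_sum fun i _ => (hval i w).2
      _ = F.card := by simp
  have h_int : Integrable (fun w => Real.exp (θ * X w)) P := by
    refine (integrable_const (Real.exp (θ * F.card))).mono'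
      ((Real.measurable_exp.comp (h_meas_X.const_mul θ)).aestronglyMeasurable)
      (ae_of_all _ fun w => ?_)
    rw [Real.norm_eq_abs, abs_of_pos (Real.exp_pos _)]
    exact Real.exp_le_exp.2 (mul_le_mul_of_nonneg_left (hXle w) hθ0)
  have h1 := measure_ge_le_exp_mul_mgf (μ := P) (X := X) ((F.card : ℝ) * (p + t)) hθ0 h_int
  have hmgfX : mgf X P θ = (1 - p + p * Real.exp θ) ^ F.card := by
    rw [hX, hindep.mgf_sum hmeas F, Finset.prod_congr rfl fun i hi => hmgf i hi θ,
      Finset.prod_const]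
  have hbase : (0:ℝ) ≤ 1 - p + p * Real.exp θ := by
    nlinarith [Real.one_le_exp hθ0]
  have h2 : Real.exp (-θ * ((F.card : ℝ) * (p + t))) * mgf X P θ ≤
      Real.exp (-(F.card : ℝ) * t ^ 2) := by
    rw [hmgfX]
    calc Real.exp (-θ * ((F.card : ℝ) * (p + t))) * (1 - p + p * Real.exp θ) ^ F.card
        ≤ Real.exp (-θ * ((F.card : ℝ) * (p + t))) *
          (Real.exp (p * θ + θ ^ 2 / 4)) ^ F.card := by
          apply mul_le_mul_of_nonneg_left _ (Real.exp_pos _).le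
          exact pow_le_pow_left₀ hbase (bern_mgf_bound hp0 hp1 hθ0 hθ2) _
      _ = Real.exp (-θ * ((F.card : ℝ) * (p + t)) + (F.card : ℝ) * (p * θ + θ ^ 2 / 4)) := by
          rw [← Real.exp_nat_mul, ← Real.exp_add]
      _ = Real.exp (-(F.card : ℝ) * t ^ 2) := by
          congr 1
          rw [hθ]; ring
  refine (ENNReal.le_ofReal_iff_toReal_le (measure_ne_top P _) (Real.exp_pos _).le).2 ?_
  calc (P {w | (F.card : ℝ) * (p + t) ≤ ∑ i ∈ F, Z i w}).toReal
      = (P {w | (F.card : ℝ) * (p + t) ≤ X w}).toReal := by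
        rw [show {w | (F.card : ℝ) * (p + t) ≤ ∑ i ∈ F, Z i w}
          = {w | (F.card : ℝ) * (p + t) ≤ X w} from Set.ext fun w => by simp [hXapp]]
    _ ≤ _ := h1
    _ ≤ _ := h2

lemma mgf_comp_finite {W S : Type*} [MeasurableSpace W] [Fintype S] [MeasurableSpace S]
    [MeasurableSingletonClass S] (P : Measure W) [IsProbabilityMeasure P]
    (Y : W → S) (hY : Measurable Y) (dist : S → ℝ)
    (hd : ∀ v, P {w | Y w = v} = ENNReal.ofReal (dist v)) (hd0 : ∀ v, 0 ≤ dist v)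
    (g : S → ℝ) (θ : ℝ) :
    mgf (fun w => g (Y w)) P θ = ∑ v, dist v * Real.exp (θ * g v) := by
  haveI : IsProbabilityMeasure (P.map Y) := Measure.isProbabilityMeasure_map hY.aemeasurable
  have hmeas : Measurable (fun v : S => Real.exp (θ * g v)) := measurable_of_countable _
  calc mgf (fun w => g (Y w)) P θ
      = ∫ w, Real.exp (θ * g (Y w)) ∂P := rfl
    _ = ∫ v, Real.exp (θ * g v) ∂(P.map Y) :=
        (integral_map hY.aemeasurable hmeas.aestronglyMeasurable).symm
    _ = ∑ v, ((P.map Y) {v}).toReal • Real.exp (θ * g v) :=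
        integral_fintype .of_finite
    _ = ∑ v, dist v * Real.exp (θ * g v) := by
        refine Finset.sum_congr rfl fun v _ => ?_
        rw [Measure.map_apply hY (measurableSet_singleton v),
          show Y ⁻¹' {v} = {w | Y w = v} from by ext w; simp, hd v,
          ENNReal.toReal_ofReal (hd0 v), smul_eq_mul]

lemma mgf_ind_one {W S : Type*} [MeasurableSpace W] [Fintype S] [DecidableEq S]
    [MeasurableSpace S] [MeasurableSingletonClass S] (P : Measure W) [IsProbabilityMeasure P]
    (Y : W → S) (hY : Measurable Y) (dist : S → ℝ)
    (hd : ∀ v, P {w | Y w = v} = ENNReal.ofReal (dist v)) (hd0 : ∀ v, 0 ≤ dist v)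
    (hsum : ∑ v, dist v = 1) (s : S) (θ : ℝ) :
    mgf (fun w => if Y w = s then (1:ℝ) else 0) P θ = 1 - dist s + dist s * Real.exp θ := by
  have h := mgf_comp_finite P Y hY dist hd hd0 (fun v => if v = s then (1:ℝ) else 0) θ
  rw [show (fun w => if Y w = s then (1:ℝ) else 0)
      = (fun w => (fun v => if v = s then (1:ℝ) else 0) (Y w)) from rfl, h]
  have hcong : ∀ v ∈ Finset.univ (α := S),
      dist v * Real.exp (θ * (if v = s then (1:ℝ) else 0))
      = (if v = s then dist v * Real.exp θ else dist v) := by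
    intro v _; split <;> simp
  rw [Finset.sum_congr rfl hcong, ← Finset.add_sum_erase _ _ (Finset.mem_univ s)]
  rw [if_pos rfl, Finset.sum_congr rfl (fun v hv => if_neg (Finset.mem_erase.1 hv).1),
    Finset.sum_erase_eq_sub (Finset.mem_univ s), hsum]
  ring

lemma mgf_ind_zero {W S : Type*} [MeasurableSpace W] [Fintype S] [DecidableEq S]
    [MeasurableSpace S] [MeasurableSingletonClass S] (P : Measure W) [IsProbabilityMeasure P]
    (Y : W → S) (hY : Measurable Y) (dist : S → ℝ)
    (hd : ∀ v, P {w | Y w = v} = ENNReal.ofReal (dist v)) (hd0 : ∀ v, 0 ≤ dist v)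
    (hsum : ∑ v, dist v = 1) (s : S) (θ : ℝ) :
    mgf (fun w => if Y w = s then (0:ℝ) else 1) P θ
      = 1 - (1 - dist s) + (1 - dist s) * Real.exp θ := by
  have h := mgf_comp_finite P Y hY dist hd hd0 (fun v => if v = s then (0:ℝ) else 1) θ
  rw [show (fun w => if Y w = s then (0:ℝ) else 1)
      = (fun w => (fun v => if v = s then (0:ℝ) else 1) (Y w)) from rfl, h]
  have hcong : ∀ v ∈ Finset.univ (α := S),
      dist v * Real.exp (θ * (if v = s then (0:ℝ) else 1))
      = (if v = s then dist v else dist v * Real.exp θ) := by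
    intro v _; split <;> simp
  rw [Finset.sum_congr rfl hcong, ← Finset.add_sum_erase _ _ (Finset.mem_univ s)]
  rw [if_pos rfl, Finset.sum_congr rfl (fun v hv => if_neg (Finset.mem_erase.1 hv).1),
    ← Finset.sum_mul, Finset.sum_erase_eq_sub (Finset.mem_univ s), hsum]
  ring

/-- Theorem 3, Thm-H2: error bound for the random operator
`Ĥ2`: if `M ≥ (|X|²/ε²) ln(2|X|²/δ)` then, with probability at least `1 - δ`,
`‖∑_x ν̂_x(·) μ(x) - ∑_x ν_x(·) μ(x)‖₁ ≤ ε`. -/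
theorem statement17 {S : Type*} [Fintype S] [Nonempty S] [DecidableEq S]
    [MeasurableSpace S] [MeasurableSingletonClass S]
    {W : Type*} [MeasurableSpace W] (P : MeasureTheory.Measure W)
    [MeasureTheory.IsProbabilityMeasure P]
    (ε δ : ℝ) (hε0 : 0 < ε) (hε1 : ε < 1) (hδ0 : 0 < δ) (hδ1 : δ < 1)
    (μ : S → ℝ) (hμ : IsProb μ)
    (ν : S → S → ℝ) (hν : ∀ x, IsProb (ν x))
    (M : ℕ) (Y : S × Fin M → W → S)
    (hYmeas : ∀ i, Measurable (Y i))
    (hYindep : ProbabilityTheory.iIndepFun Y P)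
    (hYdist : ∀ x t s, P {w | Y (x, t) w = s} = ENNReal.ofReal (ν x s))
    (hM : ((Fintype.card S : ℝ) ^ 2 / ε ^ 2) *
        Real.log (2 * (Fintype.card S : ℝ) ^ 2 / δ) ≤ (M : ℝ)) :
    ENNReal.ofReal (1 - δ) ≤
      P {w | l1
          (fun s => ∑ x,
            ((∑ t : Fin M, if Y (x, t) w = s then (1 : ℝ) else 0) / (M : ℝ)) * μ x)
          (fun s => ∑ x, ν x s * μ x) ≤ ε} := by
  classical
  set n : ℕ := Fintype.card S with hn
  have hn1 : (1:ℝ) ≤ (n : ℝ) := by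
    have : 0 < n := Fintype.card_pos
    exact_mod_cast this
  have hnpos : (0:ℝ) < (n:ℝ) := by linarith
  set t0 : ℝ := ε / n with ht0def
  have ht00 : 0 < t0 := div_pos hε0 hnpos
  have ht01 : t0 ≤ 1 := by
    rw [ht0def, div_le_one hnpos]; linarith
  -- the log is positive, hence M ≥ 1
  have hlogpos : 0 < Real.log (2 * (n : ℝ) ^ 2 / δ) := by
    apply Real.log_pos
    rw [lt_div_iff₀ hδ0]
    nlinarith
  have hMpos : (0:ℝ) < (M:ℝ) := by
    have h1 : (0:ℝ) < ((n:ℝ)^2 / ε^2) * Real.log (2 * (n:ℝ)^2 / δ) := by positivity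
    linarith [hM]
  -- exp(-M t0²) ≤ δ/(2n²)
  have hexp : Real.exp (-(M:ℝ) * t0 ^ 2) ≤ δ / (2 * (n:ℝ)^2) := by
    have hL : Real.log (2 * (n:ℝ)^2 / δ) ≤ (M:ℝ) * t0 ^ 2 := by
      have h2 := mul_le_mul_of_nonneg_right hM (by positivity : (0:ℝ) ≤ ε^2 / (n:ℝ)^2)
      have he : ((n:ℝ)^2 / ε^2) * Real.log (2 * (n:ℝ)^2 / δ) * (ε^2 / (n:ℝ)^2)
          = Real.log (2 * (n:ℝ)^2 / δ) := by
        field_simp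
      have ht : (M:ℝ) * (ε^2/(n:ℝ)^2) = (M:ℝ) * t0 ^ 2 := by
        rw [ht0def]; field_simp
      rw [he, ht] at h2; exact h2
    calc Real.exp (-(M:ℝ) * t0 ^ 2) ≤ Real.exp (-Real.log (2 * (n:ℝ)^2 / δ)) := by
          apply Real.exp_le_exp.2; linarith
      _ = δ / (2 * (n:ℝ)^2) := by
          rw [Real.exp_neg, Real.exp_log (by positivity)]
          rw [inv_div]
  -- numerator of the empirical distribution
  set Num : S → S → W → ℝ :=
    fun x s w => ∑ t : Fin M, if Y (x, t) w = s then (1:ℝ) else 0 with hNum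
  -- good events
  set G : S → S → Set W := fun x s => {w | |Num x s w / M - ν x s| ≤ t0} with hG
  -- upper tail bound
  have tail1 : ∀ x s : S, P {w | (M:ℝ) * (ν x s + t0) ≤ Num x s w} ≤
      ENNReal.ofReal (Real.exp (-(M:ℝ) * t0 ^ 2)) := by
    intro x s
    have hgmeas : Measurable (fun v : S => if v = s then (1:ℝ) else 0) :=
      measurable_of_countable _
    have hind := hYindep.comp (fun _ => fun v : S => if v = s then (1:ℝ) else 0)
      (fun _ => hgmeas)
    have hch := chernoff_aux P (fun i => (fun v : S => if v = s then (1:ℝ) else 0) ∘ Y i)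
      (fun i => hgmeas.comp (hYmeas i)) hind
      (({x} : Finset S) ×ˢ (Finset.univ : Finset (Fin M))) (ν x s)
      ((hν x).1 s)
      (by
        have := (hν x).2
        calc ν x s ≤ ∑ v, ν x v := Finset.single_le_sum (fun v _ => (hν x).1 v) (Finset.mem_univ s)
          _ = 1 := this)
      (fun i w => by by_cases h : Y i w = s <;> simp [Function.comp, h])
      (by
        rintro ⟨x', t⟩ hi θ
        rw [Finset.mem_product, Finset.mem_singleton] at hi
        obtain ⟨hx', -⟩ := hi
        subst hx'
        exact mgf_ind_one P (Y (x', t)) (hYmeas _) (ν x') (hYdist x' t) ((hν x').1)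
          (hν x').2 s θ)
      t0 ht00.le ht01
    have hcard : ((({x} : Finset S) ×ˢ (Finset.univ : Finset (Fin M))).card : ℝ) = (M:ℝ) := by
      simp
    rw [hcard] at hch
    have hseq : ∀ w, (∑ i ∈ ({x} : Finset S) ×ˢ (Finset.univ : Finset (Fin M)),
        ((fun i => (fun v : S => if v = s then (1:ℝ) else 0) ∘ Y i) i) w) = Num x s w := by
      intro w
      rw [Finset.sum_product, Finset.sum_singleton]
      simp [hNum, Function.comp]
    rw [show {w | (M:ℝ) * (ν x s + t0) ≤ Num x s w}
        = {w | (M:ℝ) * (ν x s + t0) ≤ ∑ i ∈ ({x} : Finset S) ×ˢ (Finset.univ : Finset (Fin M)),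
          ((fun i => (fun v : S => if v = s then (1:ℝ) else 0) ∘ Y i) i) w}
      from Set.ext fun w => by rw [Set.mem_setOf_eq, Set.mem_setOf_eq, hseq w]]
    exact hch
  -- lower tail bound
  have tail0 : ∀ x s : S, P {w | (M:ℝ) * ((1 - ν x s) + t0) ≤ (M:ℝ) - Num x s w} ≤
      ENNReal.ofReal (Real.exp (-(M:ℝ) * t0 ^ 2)) := by
    intro x s
    have hνle : ν x s ≤ 1 := by
      calc ν x s ≤ ∑ v, ν x v := Finset.single_le_sum (fun v _ => (hν x).1 v) (Finset.mem_univ s)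
        _ = 1 := (hν x).2
    have hgmeas : Measurable (fun v : S => if v = s then (0:ℝ) else 1) :=
      measurable_of_countable _
    have hind := hYindep.comp (fun _ => fun v : S => if v = s then (0:ℝ) else 1)
      (fun _ => hgmeas)
    have hch := chernoff_aux P (fun i => (fun v : S => if v = s then (0:ℝ) else 1) ∘ Y i)
      (fun i => hgmeas.comp (hYmeas i)) hind
      (({x} : Finset S) ×ˢ (Finset.univ : Finset (Fin M))) (1 - ν x s)
      (by linarith) (by linarith [(hν x).1 s])
      (fun i w => by by_cases h : Y i w = s <;> simp [Function.comp, h])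
      (by
        rintro ⟨x', t⟩ hi θ
        rw [Finset.mem_product, Finset.mem_singleton] at hi
        obtain ⟨hx', -⟩ := hi
        subst hx'
        exact mgf_ind_zero P (Y (x', t)) (hYmeas _) (ν x') (hYdist x' t) ((hν x').1)
          (hν x').2 s θ)
      t0 ht00.le ht01
    have hcard : ((({x} : Finset S) ×ˢ (Finset.univ : Finset (Fin M))).card : ℝ) = (M:ℝ) := by
      simp
    rw [hcard] at hch
    have hseq : ∀ w, (∑ i ∈ ({x} : Finset S) ×ˢ (Finset.univ : Finset (Fin M)),
        ((fun i => (fun v : S => if v = s then (0:ℝ) else 1) ∘ Y i) i) w)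
        = (M:ℝ) - Num x s w := by
      intro w
      rw [Finset.sum_product, Finset.sum_singleton]
      simp only [hNum, Function.comp]
      rw [show (∑ t : Fin M, if Y (x, t) w = s then (0:ℝ) else 1)
          = ∑ t : Fin M, ((1:ℝ) - if Y (x, t) w = s then 1 else 0) from
        Finset.sum_congr rfl fun t _ => by split <;> norm_num, Finset.sum_sub_distrib]
      simp
    rw [show {w | (M:ℝ) * ((1 - ν x s) + t0) ≤ (M:ℝ) - Num x s w}
        = {w | (M:ℝ) * ((1 - ν x s) + t0) ≤ ∑ i ∈ ({x} : Finset S) ×ˢ (Finset.univ : Finset (Fin M)),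
          ((fun i => (fun v : S => if v = s then (0:ℝ) else 1) ∘ Y i) i) w}
      from Set.ext fun w => by rw [Set.mem_setOf_eq, Set.mem_setOf_eq, hseq w]]
    exact hch
  -- complement of good event is contained in the union of the two tails
  have hGc : ∀ x s : S, (G x s)ᶜ ⊆ {w | (M:ℝ) * (ν x s + t0) ≤ Num x s w} ∪
      {w | (M:ℝ) * ((1 - ν x s) + t0) ≤ (M:ℝ) - Num x s w} := by
    intro x s w hw
    simp only [hG, Set.mem_compl_iff, Set.mem_setOf_eq, not_le] at hw
    rcases lt_abs.1 hw with h | h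
    · left
      rw [Set.mem_setOf_eq]
      rw [show Num x s w / (M:ℝ) - ν x s = Num x s w / (M:ℝ) - ν x s from rfl] at h
      have : (ν x s + t0) * (M:ℝ) < Num x s w := by
        have h2 : ν x s + t0 < Num x s w / (M:ℝ) := by linarith
        exact (lt_div_iff₀ hMpos).1 h2
      linarith
    · right
      rw [Set.mem_setOf_eq]
      have h2 : Num x s w / (M:ℝ) < ν x s - t0 := by linarith
      have : Num x s w < (ν x s - t0) * (M:ℝ) := (div_lt_iff₀ hMpos).1 h2
      nlinarith
  -- union bound
  have perpair : ∀ x s : S, P ((G x s)ᶜ) ≤ ENNReal.ofReal (δ / (n:ℝ)^2) := by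
    intro x s
    calc P ((G x s)ᶜ) ≤ P ({w | (M:ℝ) * (ν x s + t0) ≤ Num x s w} ∪
          {w | (M:ℝ) * ((1 - ν x s) + t0) ≤ (M:ℝ) - Num x s w}) := measure_mono (hGc x s)
      _ ≤ P {w | (M:ℝ) * (ν x s + t0) ≤ Num x s w} +
          P {w | (M:ℝ) * ((1 - ν x s) + t0) ≤ (M:ℝ) - Num x s w} := measure_union_le _ _
      _ ≤ ENNReal.ofReal (Real.exp (-(M:ℝ) * t0 ^ 2)) +
          ENNReal.ofReal (Real.exp (-(M:ℝ) * t0 ^ 2)) := add_le_add (tail1 x s) (tail0 x s)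
      _ ≤ ENNReal.ofReal (δ / (2 * (n:ℝ)^2)) + ENNReal.ofReal (δ / (2 * (n:ℝ)^2)) :=
          add_le_add (ENNReal.ofReal_le_ofReal hexp) (ENNReal.ofReal_le_ofReal hexp)
      _ = ENNReal.ofReal (δ / (2 * (n:ℝ)^2) + δ / (2 * (n:ℝ)^2)) :=
          (ENNReal.ofReal_add (by positivity) (by positivity)).symm
      _ = ENNReal.ofReal (δ / (n:ℝ)^2) := by
          congr 1; field_simp; ring
  have hbadP : P (⋃ x : S, ⋃ s : S, (G x s)ᶜ) ≤ ENNReal.ofReal δ := by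
    calc P (⋃ x : S, ⋃ s : S, (G x s)ᶜ)
        ≤ ∑' x : S, P (⋃ s : S, (G x s)ᶜ) := measure_iUnion_le _
      _ ≤ ∑' x : S, ∑' s : S, P ((G x s)ᶜ) := ENNReal.tsum_le_tsum fun x => measure_iUnion_le _
      _ ≤ ∑' x : S, ∑' s : S, ENNReal.ofReal (δ / (n:ℝ)^2) :=
          ENNReal.tsum_le_tsum fun x => ENNReal.tsum_le_tsum fun s => perpair x s
      _ = (n : ℝ≥0∞) * ((n : ℝ≥0∞) * ENNReal.ofReal (δ / (n:ℝ)^2)) := by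
          simp only [tsum_fintype, Finset.sum_const, Finset.card_univ, ← hn, nsmul_eq_mul]
      _ = ENNReal.ofReal δ := by
          rw [← ENNReal.ofReal_natCast n, ← ENNReal.ofReal_mul (by positivity),
            ← ENNReal.ofReal_mul (by positivity)]
          congr 1
          field_simp
  -- the good event implies the l1 bound
  have hsub : (⋂ x : S, ⋂ s : S, G x s) ⊆
      {w | l1 (fun s => ∑ x, ((∑ t : Fin M, if Y (x, t) w = s then (1:ℝ) else 0) / (M:ℝ)) * μ x)
        (fun s => ∑ x, ν x s * μ x) ≤ ε} := by
    intro w hw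
    simp only [Set.mem_iInter, hG, Set.mem_setOf_eq] at hw
    rw [Set.mem_setOf_eq]
    show l1 (fun s => ∑ x, (Num x s w / (M:ℝ)) * μ x) (fun s => ∑ x, ν x s * μ x) ≤ ε
    rw [l1]
    calc ∑ s, |∑ x, (Num x s w / (M:ℝ)) * μ x - ∑ x, ν x s * μ x|
        = ∑ s, |∑ x, (Num x s w / (M:ℝ) - ν x s) * μ x| := by
          refine Finset.sum_congr rfl fun s _ => ?_
          rw [← Finset.sum_sub_distrib]
          congr 1
          exact Finset.sum_congr rfl fun x _ => by ring
      _ ≤ ∑ s : S, ∑ x, |Num x s w / (M:ℝ) - ν x s| * μ x := by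
          refine Finset.sum_le_sum fun s _ => ?_
          refine (Finset.abs_sum_le_sum_abs _ _).trans (le_of_eq ?_)
          exact Finset.sum_congr rfl fun x _ => by
            rw [abs_mul, abs_of_nonneg (hμ.1 x)]
      _ ≤ ∑ s : S, ∑ x, t0 * μ x := by
          refine Finset.sum_le_sum fun s _ => Finset.sum_le_sum fun x _ => ?_
          exact mul_le_mul_of_nonneg_right (hw x s) (hμ.1 x)
      _ = ∑ s : S, t0 := by
          refine Finset.sum_congr rfl fun s _ => ?_
          rw [← Finset.mul_sum, hμ.2, mul_one]
      _ = (n : ℝ) * t0 := by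
          rw [Finset.sum_const, Finset.card_univ, nsmul_eq_mul, hn]
      _ = ε := by
          rw [ht0def]; field_simp
  -- conclusion
  have h1 : (1 : ℝ≥0∞) ≤ P (⋂ x : S, ⋂ s : S, G x s) + ENNReal.ofReal δ := by
    have hu := measure_union_le (μ := P) (⋂ x : S, ⋂ s : S, G x s) (⋂ x : S, ⋂ s : S, G x s)ᶜ
    rw [Set.union_compl_self, measure_univ] at hu
    refine hu.trans (add_le_add le_rfl ?_)
    rw [show (⋂ x : S, ⋂ s : S, G x s)ᶜ = ⋃ x : S, ⋃ s : S, (G x s)ᶜ from by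
      simp [Set.compl_iInter]]
    exact hbadP
  calc ENNReal.ofReal (1 - δ) = 1 - ENNReal.ofReal δ := by
        rw [ENNReal.ofReal_sub _ hδ0.le, ENNReal.ofReal_one]
    _ ≤ P (⋂ x : S, ⋂ s : S, G x s) := tsub_le_iff_right.2 h1
    _ ≤ _ := measure_mono hsub

end MFG
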